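/- Let S ⊂ S^{n-1} be a spherical two-distance set with inner products a and b between distinct points, where -1 ≤ b < a < 1 and a + b ≥ 0. Then |S| ≤ n(n+1)/2. -/

import Mathlib

open RealInnerProductSpace

namespace MusinAux

open Finset

def PP (n : ℕ) : Finset (Fin n × Fin n) :=
  (univ : Finset (Fin n × Fin n)).filter (fun p => p.1 ≤ p.2)

lemma card_PP (n : ℕ) : (PP n).card = n * (n + 1) / 2 := by
  classical
  set P := PP n with hP
  set P' := (univ : Finset (Fin n × Fin n)).filter (fun p => p.2 ≤ p.1) with hP'
  have hswap : P'.card = P.card := by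
    apply Finset.card_nbij' (fun p => (p.2, p.1)) (fun p => (p.2, p.1))
    · intro p hp; simp only [hP, hP', PP, Finset.mem_coe, mem_filter, mem_univ, true_and] at *; exact hp
    · intro p hp; simp only [hP, hP', PP, Finset.mem_coe, mem_filter, mem_univ, true_and] at *; exact hp
    · intro p _; rfl
    · intro p _; rfl
  have hunion : P ∪ P' = univ := by
    ext p; simp [hP, hP', PP, le_total p.1 p.2]
  have hinter : P ∩ P' = (univ : Finset (Fin n × Fin n)).filter (fun p => p.1 = p.2) := by
    ext p
    simp only [hP, hP', PP, mem_inter, mem_filter, mem_univ, true_and]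
    constructor
    · rintro ⟨h1, h2⟩; exact le_antisymm h1 h2
    · rintro h; exact ⟨le_of_eq h, le_of_eq h.symm⟩
  have hdiag : ((univ : Finset (Fin n × Fin n)).filter (fun p => p.1 = p.2)).card = n := by
    have : ((univ : Finset (Fin n × Fin n)).filter (fun p => p.1 = p.2)).card
        = (univ : Finset (Fin n)).card := by
      apply Finset.card_nbij' (fun p => p.1) (fun i => (i, i))
      · intro p hp; simp
      · intro i _; simp
      · intro p hp; simp only [Finset.mem_coe, mem_filter] at hp; ext <;> simp [hp.2]
      · intro i _; rfl
    simpa using this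
  have h2 : P.card + P'.card = n * n + n := by
    have := Finset.card_union_add_card_inter P P'
    rw [hunion, hinter, hdiag] at this
    simp only [card_univ, Fintype.card_prod, Fintype.card_fin] at this
    omega
  have hmul : n * (n + 1) = n * n + n := by ring
  omega

lemma sum_le_pairs_diag {n : ℕ} (g : Fin n × Fin n → ℝ) :
    ∑ p ∈ PP n, (if p.1 = p.2 then g p else 0) = ∑ i : Fin n, g (i, i) := by
  classical
  have h0 : ∑ p ∈ (univ : Finset (Fin n × Fin n)).filter (fun p => p.1 = p.2), g p
      = ∑ i : Fin n, g (i, i) := by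
    apply Finset.sum_nbij' (fun p => p.1) (fun i => (i, i))
    · intro p hp; simp
    · intro i _; simp
    · intro p hp; simp only [mem_filter] at hp; ext <;> simp [hp.2]
    · intro i _; rfl
    · intro p hp; simp only [mem_filter] at hp
      congr 1; ext <;> simp [hp.2]
  rw [← h0, ← Finset.sum_filter, PP, Finset.filter_filter]
  apply Finset.sum_congr _ (fun _ _ => rfl)
  apply Finset.filter_congr
  intro p _
  constructor
  · rintro ⟨_, h⟩; exact h
  · intro h; exact ⟨le_of_eq h, h⟩

lemma sum_le_pairs {n : ℕ} (g : Fin n × Fin n → ℝ) (hg : ∀ i j, g (i, j) = g (j, i)) :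
    ∑ p ∈ PP n, (if p.1 = p.2 then g p else 2 * g p) = ∑ p : Fin n × Fin n, g p := by
  classical
  set P := PP n with hP
  have hsplit : ∀ p ∈ P, (if p.1 = p.2 then g p else 2 * g p)
      = g p + (if p.1 = p.2 then 0 else g p) := by
    intro p _; by_cases h : p.1 = p.2 <;> simp [h]; ring
  rw [Finset.sum_congr rfl hsplit, Finset.sum_add_distrib]
  have h1 : ∑ p ∈ P.filter (fun p => ¬ p.1 = p.2), g p
      = ∑ p ∈ P, (if p.1 = p.2 then (0:ℝ) else g p) := by
    rw [Finset.sum_filter]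
    apply Finset.sum_congr rfl
    intro p _; by_cases h : p.1 = p.2 <;> simp [h]
  have hPlt : P.filter (fun p => ¬ p.1 = p.2)
      = (univ : Finset (Fin n × Fin n)).filter (fun p => p.1 < p.2) := by
    rw [hP, PP, Finset.filter_filter]
    apply Finset.filter_congr
    intro p _
    simp only [lt_iff_le_and_ne, ne_eq]
  have hPeq : P.filter (fun p => p.1 = p.2)
      = (univ : Finset (Fin n × Fin n)).filter (fun p => p.1 = p.2) := by
    rw [hP, PP, Finset.filter_filter]
    apply Finset.filter_congr
    intro p _
    constructor
    · rintro ⟨_, h⟩; exact h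
    · intro h; exact ⟨le_of_eq h, h⟩
  have hPsplit : ∑ p ∈ P, g p
      = ∑ p ∈ (univ : Finset (Fin n × Fin n)).filter (fun p => p.1 = p.2), g p
        + ∑ p ∈ (univ : Finset (Fin n × Fin n)).filter (fun p => p.1 < p.2), g p := by
    rw [← hPlt, ← hPeq, Finset.sum_filter_add_sum_filter_not P (fun p => p.1 = p.2)]
  have hgt : ∑ p ∈ (univ : Finset (Fin n × Fin n)).filter (fun p => p.2 < p.1), g p
      = ∑ p ∈ (univ : Finset (Fin n × Fin n)).filter (fun p => p.1 < p.2), g p := by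
    apply Finset.sum_nbij' (fun p => (p.2, p.1)) (fun p => (p.2, p.1))
    · intro p hp; simp only [mem_filter, mem_univ, true_and] at *; exact hp
    · intro p hp; simp only [mem_filter, mem_univ, true_and] at *; exact hp
    · intro p _; rfl
    · intro p _; rfl
    · intro p _; exact hg p.1 p.2
  have hQlt : ((univ : Finset (Fin n × Fin n)).filter (fun p => ¬ p.1 = p.2)).filter
        (fun p => p.1 < p.2)
      = (univ : Finset (Fin n × Fin n)).filter (fun p => p.1 < p.2) := by
    rw [Finset.filter_filter]
    apply Finset.filter_congr
    intro p _
    constructor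
    · rintro ⟨_, h⟩; exact h
    · intro h; exact ⟨h.ne, h⟩
  have hQgt : ((univ : Finset (Fin n × Fin n)).filter (fun p => ¬ p.1 = p.2)).filter
        (fun p => ¬ p.1 < p.2)
      = (univ : Finset (Fin n × Fin n)).filter (fun p => p.2 < p.1) := by
    rw [Finset.filter_filter]
    apply Finset.filter_congr
    intro p _
    constructor
    · rintro ⟨h1, h2⟩
      rcases lt_trichotomy p.1 p.2 with h | h | h
      · exact absurd h h2
      · exact absurd h h1
      · exact h
    · intro h; exact ⟨fun he => absurd he.symm h.ne, fun hl => absurd (hl.trans h) (lt_irrefl _)⟩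
  have htotal : ∑ p : Fin n × Fin n, g p
      = ∑ p ∈ (univ : Finset (Fin n × Fin n)).filter (fun p => p.1 = p.2), g p
        + (∑ p ∈ (univ : Finset (Fin n × Fin n)).filter (fun p => p.1 < p.2), g p
        + ∑ p ∈ (univ : Finset (Fin n × Fin n)).filter (fun p => p.2 < p.1), g p) := by
    rw [← hQlt, ← hQgt,
      Finset.sum_filter_add_sum_filter_not
        (((univ : Finset (Fin n × Fin n))).filter (fun p => ¬ p.1 = p.2)) (fun p => p.1 < p.2),
      Finset.sum_filter_add_sum_filter_not (univ : Finset (Fin n × Fin n)) (fun p => p.1 = p.2)]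
  rw [← h1, hPlt, hPsplit, htotal, hgt]
  ring

variable {n : ℕ}

def qF (p : Fin n × Fin n) : EuclideanSpace ℝ (Fin n) → ℝ := fun y => y p.1 * y p.2
def lF (i : Fin n) : EuclideanSpace ℝ (Fin n) → ℝ := fun y => y i
noncomputable def hF (a b : ℝ) (x : EuclideanSpace ℝ (Fin n)) :
    EuclideanSpace ℝ (Fin n) → ℝ :=
  (∑ p ∈ PP n, (if p.1 = p.2 then x p.1 * x p.2 + a * b else 2 * (x p.1 * x p.2)) • qF p)
    + ∑ i, ((-(a + b)) * x i) • lF i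

lemma inner_eq (x y : EuclideanSpace ℝ (Fin n)) : ⟪x, y⟫ = ∑ i, x i * y i := by
  simp [PiLp.inner_apply, RCLike.inner_apply, conj_trivial]
  exact Finset.sum_congr rfl (fun i _ => mul_comm _ _)

lemma hF_apply (a b : ℝ) (x y : EuclideanSpace ℝ (Fin n)) :
    hF a b x y = ⟪x, y⟫ ^ 2 - (a + b) * ⟪x, y⟫ + a * b * ⟪y, y⟫ := by
  classical
  have happ : hF a b x y
      = (∑ p ∈ PP n, (if p.1 = p.2 then x p.1 * x p.2 + a * b else 2 * (x p.1 * x p.2))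
          * (y p.1 * y p.2))
        + ∑ i, (-(a + b)) * x i * y i := by
    simp only [hF, Pi.add_apply, Finset.sum_apply, Pi.smul_apply, smul_eq_mul, qF, lF]
  have hquad : ∑ p ∈ PP n,
      (if p.1 = p.2 then x p.1 * x p.2 + a * b else 2 * (x p.1 * x p.2)) * (y p.1 * y p.2)
      = (∑ i, x i * y i) ^ 2 + a * b * ∑ i, y i * y i := by
    have split : ∀ p ∈ PP n,
        (if p.1 = p.2 then x p.1 * x p.2 + a * b else 2 * (x p.1 * x p.2)) * (y p.1 * y p.2)
        = (if p.1 = p.2 then (x p.1 * y p.1) * (x p.2 * y p.2)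
            else 2 * ((x p.1 * y p.1) * (x p.2 * y p.2)))
          + (if p.1 = p.2 then a * b * (y p.1 * y p.2) else 0) := by
      intro p _; by_cases h : p.1 = p.2 <;> simp [h] <;> ring
    rw [Finset.sum_congr rfl split, Finset.sum_add_distrib]
    have e1 : ∑ p ∈ PP n, (if p.1 = p.2 then (x p.1 * y p.1) * (x p.2 * y p.2)
          else 2 * ((x p.1 * y p.1) * (x p.2 * y p.2)))
        = ∑ p : Fin n × Fin n, (x p.1 * y p.1) * (x p.2 * y p.2) :=
      sum_le_pairs _ (fun i j => by ring)
    have e2 : ∑ p : Fin n × Fin n, (x p.1 * y p.1) * (x p.2 * y p.2)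
        = (∑ i, x i * y i) ^ 2 := by
      rw [sq, Finset.sum_mul_sum, ← Finset.sum_product']
      rfl
    have e3 : ∑ p ∈ PP n, (if p.1 = p.2 then a * b * (y p.1 * y p.2) else 0)
        = a * b * ∑ i, y i * y i := by
      rw [sum_le_pairs_diag (fun p => a * b * (y p.1 * y p.2)), Finset.mul_sum]
    rw [e1, e2, e3]
  have e4 : ∑ i : Fin n, -(a + b) * x i * y i = -((a + b) * ∑ i : Fin n, x i * y i) := by
    rw [Finset.mul_sum, ← Finset.sum_neg_distrib]
    apply Finset.sum_congr rfl; intro i _; ring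
  rw [happ, hquad, inner_eq, inner_eq, e4]
  ring

end MusinAux

open MusinAux Finset

/-- **Musin's theorem.**  A spherical two-distance set in `ℝⁿ` whose two inner products `a, b`
satisfy `a + b ≥ 0` has at most `n(n+1)/2` points. -/
theorem two_distance_set_bound {n : ℕ} (S : Finset (EuclideanSpace ℝ (Fin n))) (a b : ℝ)
    (hb1 : -1 ≤ b) (hba : b < a) (ha1 : a < 1) (hab : 0 ≤ a + b)
    (hunit : ∀ x ∈ S, ‖x‖ = 1)
    (hip : ∀ x ∈ S, ∀ y ∈ S, x ≠ y → ⟪x, y⟫ = a ∨ ⟪x, y⟫ = b) :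
    S.card ≤ n * (n + 1) / 2 := by
  classical
  have hK : (0:ℝ) < (1 - a) * (1 - b) := by nlinarith
  have hself : ∀ x ∈ S, ⟪x, x⟫ = (1:ℝ) := by
    intro x hx
    rw [real_inner_self_eq_norm_sq, hunit x hx]
    norm_num
  set u : (↥S ⊕ Fin n) → (EuclideanSpace ℝ (Fin n) → ℝ) :=
    Sum.elim (fun x : ↥S => hF a b (x : EuclideanSpace ℝ (Fin n))) lF with hu
  set T : Finset (EuclideanSpace ℝ (Fin n) → ℝ) :=
    (PP n).image qF ∪ (univ : Finset (Fin n)).image lF with hT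
  have hlmem : ∀ i : Fin n, lF i ∈ Submodule.span ℝ (↑T : Set _) := by
    intro i
    apply Submodule.subset_span
    exact Finset.mem_coe.mpr (Finset.mem_union_right _ (Finset.mem_image_of_mem _ (mem_univ i)))
  have hrange : Set.range u ≤ Submodule.span ℝ (↑T : Set (EuclideanSpace ℝ (Fin n) → ℝ)) := by
    rintro f ⟨idx, rfl⟩
    cases idx with
    | inl x =>
      show hF a b (x : EuclideanSpace ℝ (Fin n)) ∈ _
      unfold hF
      apply Submodule.add_mem
      · apply Submodule.sum_mem
        intro p hp
        apply Submodule.smul_mem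
        apply Submodule.subset_span
        exact Finset.mem_coe.mpr (Finset.mem_union_left _ (Finset.mem_image_of_mem _ hp))
      · exact Submodule.sum_mem _ (fun i _ => Submodule.smul_mem _ _ (hlmem i))
    | inr i => exact hlmem i
  have hli : LinearIndependent ℝ u := by
    rw [Fintype.linearIndependent_iff]
    intro g hg
    set c : ↥S → ℝ := fun x => g (Sum.inl x) with hc
    set d : Fin n → ℝ := fun i => g (Sum.inr i) with hd
    have E : ∀ y : EuclideanSpace ℝ (Fin n),
        (∑ x : ↥S, c x * (⟪(x : EuclideanSpace ℝ (Fin n)), y⟫ ^ 2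
            - (a + b) * ⟪(x : EuclideanSpace ℝ (Fin n)), y⟫ + a * b * ⟪y, y⟫))
          + ∑ i, d i * y i = 0 := by
      intro y
      have h0 := congrFun hg y
      simp only [Finset.sum_apply, Pi.smul_apply, smul_eq_mul, Pi.zero_apply,
        Fintype.sum_sum_type, Sum.elim_inl, Sum.elim_inr, hu, lF] at h0
      rw [← h0]
      congr 1
      apply Finset.sum_congr rfl
      intro x _
      rw [hF_apply]
    set e : EuclideanSpace ℝ (Fin n) := ∑ x : ↥S, c x • (x : EuclideanSpace ℝ (Fin n)) with he
    have hinner_e : ∀ y : EuclideanSpace ℝ (Fin n),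
        ⟪e, y⟫ = ∑ x : ↥S, c x * ⟪(x : EuclideanSpace ℝ (Fin n)), y⟫ := by
      intro y
      rw [he, sum_inner]
      apply Finset.sum_congr rfl
      intro x _
      rw [real_inner_smul_left]
    have hlin : ∀ y : EuclideanSpace ℝ (Fin n),
        -(a + b) * ⟪e, y⟫ + ∑ i, d i * y i = 0 := by
      intro y
      have h1 := E y
      have h2 := E (-y)
      have hdy : ∑ i, d i * (-y) i = - ∑ i, d i * y i := by
        rw [← Finset.sum_neg_distrib]
        apply Finset.sum_congr rfl
        intro i _
        simp [PiLp.neg_apply]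
      rw [hdy] at h2
      have key : ∑ x : ↥S, c x * (⟪(x : EuclideanSpace ℝ (Fin n)), y⟫ ^ 2
            - (a + b) * ⟪(x : EuclideanSpace ℝ (Fin n)), y⟫ + a * b * ⟪y, y⟫)
          - ∑ x : ↥S, c x * (⟪(x : EuclideanSpace ℝ (Fin n)), -y⟫ ^ 2
            - (a + b) * ⟪(x : EuclideanSpace ℝ (Fin n)), -y⟫ + a * b * ⟪-y, -y⟫)
          = 2 * ∑ x : ↥S, c x * (-(a + b) * ⟪(x : EuclideanSpace ℝ (Fin n)), y⟫) := by
        rw [← Finset.sum_sub_distrib, Finset.mul_sum]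
        apply Finset.sum_congr rfl
        intro x _
        rw [inner_neg_right, inner_neg_neg]
        ring
      have hfac : ∑ x : ↥S, c x * (-(a + b) * ⟪(x : EuclideanSpace ℝ (Fin n)), y⟫)
          = -(a + b) * ⟪e, y⟫ := by
        rw [hinner_e, Finset.mul_sum]
        apply Finset.sum_congr rfl
        intro x _
        ring
      rw [hfac] at key
      linarith
    have step2 : ∀ x₀ : ↥S, c x₀ * ((1 - a) * (1 - b))
        = -(a + b) * ⟪e, (x₀ : EuclideanSpace ℝ (Fin n))⟫ := by
      intro x₀
      have h1 := E (x₀ : EuclideanSpace ℝ (Fin n))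
      have hsum : ∑ x : ↥S, c x * (⟪(x : EuclideanSpace ℝ (Fin n)), (x₀ : EuclideanSpace ℝ (Fin n))⟫ ^ 2
            - (a + b) * ⟪(x : EuclideanSpace ℝ (Fin n)), (x₀ : EuclideanSpace ℝ (Fin n))⟫
            + a * b * ⟪(x₀ : EuclideanSpace ℝ (Fin n)), (x₀ : EuclideanSpace ℝ (Fin n))⟫)
          = c x₀ * ((1 - a) * (1 - b)) := by
        rw [Fintype.sum_eq_single x₀]
        · rw [hself _ x₀.2]
          ring
        · intro x hx
          have hne : (x : EuclideanSpace ℝ (Fin n)) ≠ (x₀ : EuclideanSpace ℝ (Fin n)) := by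
            intro h
            exact hx (Subtype.ext h)
          rw [hself _ x₀.2]
          rcases hip _ x.2 _ x₀.2 hne with h | h <;> rw [h] <;> ring
      rw [hsum] at h1
      have h2 := hlin (x₀ : EuclideanSpace ℝ (Fin n))
      linarith
    have step3 : ((1 - a) * (1 - b)) * ∑ x : ↥S, (c x) ^ 2 = -(a + b) * ⟪e, e⟫ := by
      have he2 : ⟪e, e⟫ = ∑ x : ↥S, c x * ⟪e, (x : EuclideanSpace ℝ (Fin n))⟫ := by
        nth_rewrite 2 [he]
        rw [inner_sum]
        apply Finset.sum_congr rfl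
        intro x _
        rw [real_inner_smul_right]
      rw [he2, Finset.mul_sum, Finset.mul_sum]
      apply Finset.sum_congr rfl
      intro x _
      have hx := step2 x
      calc (1 - a) * (1 - b) * c x ^ 2
          = c x * (c x * ((1 - a) * (1 - b))) := by ring
        _ = c x * (-(a + b) * ⟪e, (x : EuclideanSpace ℝ (Fin n))⟫) := by rw [hx]
        _ = -(a + b) * (c x * ⟪e, (x : EuclideanSpace ℝ (Fin n))⟫) := by ring
    have hc0 : ∀ x : ↥S, c x = 0 := by
      have hsum_nonneg : (0:ℝ) ≤ ∑ x : ↥S, (c x) ^ 2 :=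
        Finset.sum_nonneg (fun x _ => sq_nonneg _)
      have hle : ((1 - a) * (1 - b)) * ∑ x : ↥S, (c x) ^ 2 ≤ 0 := by
        rw [step3]
        have h1 : (0:ℝ) ≤ ⟪e, e⟫ := real_inner_self_nonneg
        nlinarith
      have hs0 : ∑ x : ↥S, (c x) ^ 2 = 0 := by
        by_contra h
        have hpos : 0 < ∑ x : ↥S, (c x) ^ 2 := lt_of_le_of_ne hsum_nonneg (Ne.symm h)
        nlinarith
      intro x
      have := (Finset.sum_eq_zero_iff_of_nonneg
        (fun x _ => sq_nonneg (c x))).mp hs0 x (mem_univ x)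
      exact pow_eq_zero_iff (by norm_num) |>.mp this
    have he0 : e = 0 := by
      rw [he]
      apply Finset.sum_eq_zero
      intro x _
      rw [hc0 x, zero_smul]
    have hd0 : ∀ i : Fin n, d i = 0 := by
      intro i
      have h := hlin (EuclideanSpace.single i 1)
      rw [he0, inner_zero_left] at h
      simp only [mul_zero, neg_zero, zero_add, EuclideanSpace.single_apply,
        mul_ite, mul_one, mul_zero, Finset.sum_ite_eq', mem_univ, if_true] at h
      exact h
    intro idx
    cases idx with
    | inl x => exact hc0 x
    | inr i => exact hd0 i
  have hcard : Fintype.card (↥S ⊕ Fin n) ≤ T.card := by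
    set W := Submodule.span ℝ (↑T : Set (EuclideanSpace ℝ (Fin n) → ℝ)) with hW
    haveI : FiniteDimensional ℝ W := FiniteDimensional.span_finset ℝ T
    set u' : (↥S ⊕ Fin n) → W := fun idx => ⟨u idx, hrange ⟨idx, rfl⟩⟩ with hu'
    have hcomp : W.subtype ∘ u' = u := rfl
    have hli' : LinearIndependent ℝ u' :=
      LinearIndependent.of_comp W.subtype (by rw [hcomp]; exact hli)
    have h1 : Fintype.card (↥S ⊕ Fin n) ≤ Module.finrank ℝ W :=
      hli'.fintype_card_le_finrank
    have h2 : Module.finrank ℝ W ≤ T.card := finrank_span_finset_le_card T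
    omega
  have hTcard : T.card ≤ n * (n + 1) / 2 + n := by
    calc T.card ≤ ((PP n).image qF).card + ((univ : Finset (Fin n)).image lF).card :=
          Finset.card_union_le _ _
      _ ≤ (PP n).card + (univ : Finset (Fin n)).card :=
          add_le_add (Finset.card_image_le) (Finset.card_image_le)
      _ = n * (n + 1) / 2 + n := by rw [card_PP]; simp
  have hScard : Fintype.card (↥S ⊕ Fin n) = S.card + n := by
    simp [Fintype.card_sum, Fintype.card_coe]
  omega
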